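/- Let p be an odd prime and u an integer coprime to 4m where m | p−1. Then there exists a prime q ∉ {2, 3, p} with q ≡ 1 (mod 4) and q ≡ u or −u or u+m or −(u+m) (mod 4m), such that in particular q ≡ ±u (mod m). -/

import Mathlib

theorem exists_prime_in_progression (p m : ℕ) (hp : p.Prime) (hodd : Odd p)
    (hm : m ∣ p - 1) (u : ℤ) (hu : Int.gcd u (4 * m) = 1) :
    ∃ q : ℕ, q.Prime ∧ q ≠ 2 ∧ q ≠ 3 ∧ q ≠ p ∧ q % 4 = 1 ∧
      ((q : ℤ) ≡ u [ZMOD 4 * m] ∨ (q : ℤ) ≡ -u [ZMOD 4 * m] ∨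
        (q : ℤ) ≡ u + m [ZMOD 4 * m] ∨ (q : ℤ) ≡ -(u + m) [ZMOD 4 * m]) ∧
      ((q : ℤ) ≡ u [ZMOD m] ∨ (q : ℤ) ≡ -u [ZMOD m]) := by
  have hm0 : m ≠ 0 := by
    rintro rfl
    have := Nat.eq_zero_of_zero_dvd hm
    have := hp.two_le
    omega
  have hco0 : IsCoprime u (4 * (m : ℤ)) := Int.isCoprime_iff_gcd_eq_one.mpr hu
  have h2 : ¬ (2 : ℤ) ∣ u := by
    intro h
    have hd : (2 : ℤ) ∣ 4 * (m : ℤ) := ⟨2 * m, by ring⟩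
    have : IsUnit (2 : ℤ) := hco0.isUnit_of_dvd' h hd
    rw [Int.isUnit_iff] at this
    omega
  have hodd' : u % 2 = 1 :=
    (Int.emod_two_eq u).resolve_left (fun h => h2 (Int.dvd_of_emod_eq_zero h))
  have h42 : u % 4 % 2 = u % 2 := Int.emod_emod_of_dvd u (by norm_num)
  set v : ℤ := if u % 4 = 1 then u else -u with hv
  have hvgcd : Int.gcd v (4 * m) = 1 := by
    rw [hv]; split
    · exact hu
    · rw [Int.neg_gcd]; exact hu
  have hv4 : v % 4 = 1 := by
    rw [hv]; split
    · assumption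
    · omega
  haveI : NeZero (4 * m) := ⟨by omega⟩
  have hco : IsCoprime v (((4 * m : ℕ) : ℤ)) := by
    rw [Int.isCoprime_iff_gcd_eq_one]
    exact_mod_cast hvgcd
  obtain ⟨x, y, hxy⟩ := hco
  have hunit : IsUnit ((v : ZMod (4 * m))) := by
    apply IsUnit.of_mul_eq_one ((x : ZMod (4 * m)))
    have := congrArg (fun z : ℤ => (z : ZMod (4 * m))) hxy
    simp only [Int.cast_add, Int.cast_mul, Int.cast_natCast, Int.cast_one,
      ZMod.natCast_self, mul_zero, add_zero] at this
    exact (mul_comm _ _).trans this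
  obtain ⟨q, hq_gt, hq_prime, hq_mod⟩ :=
    Nat.forall_exists_prime_gt_and_eq_mod hunit (max 3 p)
  have hq3 : q > 3 := lt_of_le_of_lt (le_max_left 3 p) hq_gt
  have hqp : q > p := lt_of_le_of_lt (le_max_right 3 p) hq_gt
  have hmod : (q : ℤ) ≡ v [ZMOD ((4 * m : ℕ) : ℤ)] := by
    rw [← ZMod.intCast_eq_intCast_iff]
    push_cast
    exact_mod_cast hq_mod
  have hmod' : (q : ℤ) ≡ v [ZMOD 4 * (m : ℤ)] := by
    have h : ((4 * m : ℕ) : ℤ) = 4 * (m : ℤ) := by push_cast; ring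
    rwa [h] at hmod
  have hmod4 : (q : ℤ) ≡ v [ZMOD (4 : ℤ)] :=
    hmod'.of_dvd ⟨(m : ℤ), rfl⟩
  have hq4 : q % 4 = 1 := by
    have h1 : (q : ℤ) % 4 = v % 4 := hmod4
    omega
  have hmodm : (q : ℤ) ≡ v [ZMOD (m : ℤ)] :=
    hmod'.of_dvd ⟨4, by ring⟩
  refine ⟨q, hq_prime, by omega, by omega, by omega, hq4, ?_, ?_⟩
  · rw [hv] at hmod'
    split at hmod'
    · exact Or.inl hmod'
    · exact Or.inr (Or.inl hmod')
  · rw [hv] at hmodm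
    split at hmodm
    · exact Or.inl hmodm
    · exact Or.inr hmodm
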